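/- Let T_A, T_B be strongly continuous one-parameter groups on real Banach spaces X, Y, with T_A admitting a dichotomy projection P₊ with constants k ≥ 1, α > 0 and associated Green kernel G_A. Let f : X × Y → X be bounded and Lipschitz with constant L, with 4kα⁻¹L < 1. Define h(ξ,η) := −∫_ℝ G_A(−s) f(U₁(s;ξ,η), U₂(s;ξ,η)) ds, where (U₁(·;ξ,η),U₂(·;ξ,η)) is the unique mild solution of the semilinear system with initial value (ξ,η), and define g(ξ,η) := w_{ξ,η}(0), where w_{ξ,η} is the unique bounded continuous function with w_{ξ,η}(t) = ∫_ℝ G_A(t−s) f(T_A(s)ξ + w_{ξ,η}(s), T_B(s)η) ds for all t. Set H(x,y) := (x + h(x,y), y) and G(x,y) := (x + g(x,y), y). Then H(G(v₁,v₂)) = (v₁,v₂) for every (v₁,v₂) ∈ X × Y. -/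

import Mathlib

open MeasureTheory Set

noncomputable section

/-- A strongly continuous one-parameter group on a real Banach space. -/
def IsC0Group {X : Type*} [NormedAddCommGroup X] [NormedSpace ℝ X]
    (T : ℝ → X →L[ℝ] X) : Prop :=
  T 0 = ContinuousLinearMap.id ℝ X ∧
  (∀ t s : ℝ, T (t + s) = (T t).comp (T s)) ∧
  (∀ x : X, Continuous fun t => T t x)

/-- `P` is a dichotomy projection for the group `T` with constants `k ≥ 1`, `α > 0`. -/
def IsDichotomyProjection {X : Type*} [NormedAddCommGroup X] [NormedSpace ℝ X]
    (T : ℝ → X →L[ℝ] X) (P : X →L[ℝ] X) (k α : ℝ) : Prop :=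
  P.comp P = P ∧
  (∀ t : ℝ, P.comp (T t) = (T t).comp P) ∧
  (∀ x : X, ∀ t : ℝ, 0 ≤ t → ‖T t (P x)‖ ≤ k * Real.exp (-α * t) * ‖P x‖) ∧
  (∀ x : X, ∀ t : ℝ, t ≤ 0 → ‖T t (x - P x)‖ ≤ k * Real.exp (α * t) * ‖x - P x‖)

/-- The Green kernel associated to the dichotomy: `G_A(t) = T(t)P₊` for `t ≥ 0`,
`G_A(t) = −T(t)P₋` for `t < 0`. -/
def greenKernel {X : Type*} [NormedAddCommGroup X] [NormedSpace ℝ X]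
    (T : ℝ → X →L[ℝ] X) (P : X →L[ℝ] X) (t : ℝ) : X →L[ℝ] X :=
  if 0 ≤ t then (T t).comp P else -((T t).comp (ContinuousLinearMap.id ℝ X - P))

/-- Mild solution of the semilinear system `∂ₜu₁ = Au₁ + f(u₁,u₂)`, `∂ₜu₂ = Bu₂`. -/
def IsMildSolution {X Y : Type*} [NormedAddCommGroup X] [NormedSpace ℝ X]
    [NormedAddCommGroup Y] [NormedSpace ℝ Y]
    (TA : ℝ → X →L[ℝ] X) (TB : ℝ → Y →L[ℝ] Y)
    (f : X → Y → X) (u₁ : ℝ → X) (u₂ : ℝ → Y) : Prop :=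
  Continuous u₁ ∧ Continuous u₂ ∧
  (∀ t : ℝ, u₁ t = TA t (u₁ 0) + ∫ s in (0:ℝ)..t, TA (t - s) (f (u₁ s) (u₂ s))) ∧
  (∀ t : ℝ, u₂ t = TB t (u₂ 0))

/-- Mild solution of the linear system `∂ₜv₁ = Av₁`, `∂ₜv₂ = Bv₂`. -/
def IsLinearMildSolution {X Y : Type*} [NormedAddCommGroup X] [NormedSpace ℝ X]
    [NormedAddCommGroup Y] [NormedSpace ℝ Y]
    (TA : ℝ → X →L[ℝ] X) (TB : ℝ → Y →L[ℝ] Y)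
    (v₁ : ℝ → X) (v₂ : ℝ → Y) : Prop :=
  Continuous v₁ ∧ Continuous v₂ ∧
  (∀ t : ℝ, v₁ t = TA t (v₁ 0)) ∧ (∀ t : ℝ, v₂ t = TB t (v₂ 0))

variable {X Y : Type*} [NormedAddCommGroup X] [NormedSpace ℝ X] [CompleteSpace X]
  [NormedAddCommGroup Y] [NormedSpace ℝ Y] [CompleteSpace Y]


section AuxLemmas

open Filter Topology

variable {X : Type*} [NormedAddCommGroup X] [NormedSpace ℝ X] [CompleteSpace X]
variable {Y : Type*} [NormedAddCommGroup Y] [NormedSpace ℝ Y]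

omit [CompleteSpace X] in
lemma c0_apply_apply {T : ℝ → X →L[ℝ] X} (hT : IsC0Group T) (a b : ℝ) (x : X) :
    T a (T b x) = T (a + b) x := by
  rw [hT.2.1 a b]; rfl

lemma c0_local_bound {T : ℝ → X →L[ℝ] X} (hT : IsC0Group T) (a : ℝ) :
    ∃ M : ℝ, 0 ≤ M ∧ ∀ r : ℝ, |r| ≤ a → ‖T r‖ ≤ M := by
  have hpt : ∀ x : X, ∃ C : ℝ, ∀ r : Icc (-a) a, ‖T r x‖ ≤ C := by
    intro x
    have hc : ContinuousOn (fun t => ‖T t x‖) (Icc (-a) a) :=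
      ((hT.2.2 x).norm).continuousOn
    rcases (isCompact_Icc (a := -a) (b := a)).bddAbove_image hc with ⟨C, hC⟩
    exact ⟨C, fun r => hC ⟨r, r.2, rfl⟩⟩
  have := banach_steinhaus (𝕜₂ := ℝ) (g := fun r : Icc (-a) a => T r) ?_
  · rcases this with ⟨M, hM⟩
    refine ⟨max M 0, le_max_right _ _, fun r hr => ?_⟩
    have : -a ≤ r ∧ r ≤ a := abs_le.mp hr
    exact le_trans (hM ⟨r, this.1, this.2⟩) (le_max_left _ _)
  · intro x
    rcases hpt x with ⟨C, hC⟩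
    exact ⟨C, fun r => hC r⟩

lemma c0_joint_cont {T : ℝ → X →L[ℝ] X} (hT : IsC0Group T) {z : ℝ → X} (hz : Continuous z)
    {a : ℝ → ℝ} (ha : Continuous a) : Continuous fun s => T (a s) (z s) := by
  rw [continuous_iff_continuousAt]
  intro s₀
  rcases c0_local_bound hT (|a s₀| + 1) with ⟨M, hM0, hM⟩
  have h2 : Tendsto (fun s => T (a s) (z s₀)) (𝓝 s₀) (𝓝 (T (a s₀) (z s₀))) :=
    ((hT.2.2 (z s₀)).comp ha).tendsto s₀
  have hev : ∀ᶠ s in 𝓝 s₀, |a s| ≤ |a s₀| + 1 := by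
    have : Tendsto (fun s => |a s|) (𝓝 s₀) (𝓝 |a s₀|) := (ha.abs).tendsto s₀
    exact (this.eventually_lt_const (by linarith)).mono fun s hs => hs.le
  have h1 : Tendsto (fun s => T (a s) (z s) - T (a s) (z s₀)) (𝓝 s₀) (𝓝 0) := by
    rw [tendsto_zero_iff_norm_tendsto_zero]
    apply squeeze_zero' (g := fun s => M * ‖z s - z s₀‖)
    · exact Eventually.of_forall fun s => norm_nonneg _
    · refine hev.mono fun s hs => ?_
      have : T (a s) (z s) - T (a s) (z s₀) = T (a s) (z s - z s₀) := by
        rw [map_sub]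
      rw [this]
      exact le_trans ((T (a s)).le_opNorm _) (by
        have := hM (a s) hs
        exact mul_le_mul_of_nonneg_right this (norm_nonneg _))
    · have : Tendsto (fun s => z s - z s₀) (𝓝 s₀) (𝓝 0) := by
        have := (hz.tendsto s₀).sub_const (z s₀)
        simpa using this
      simpa using (tendsto_zero_iff_norm_tendsto_zero.mp this).const_mul M
  have := h1.add h2
  simpa [ContinuousAt] using this

omit [CompleteSpace X] in
lemma green_apply_nonneg (T : ℝ → X →L[ℝ] X) (P : X →L[ℝ] X) {r : ℝ} (hr : 0 ≤ r) (x : X) :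
    greenKernel T P r x = T r (P x) := by
  simp [greenKernel, if_pos hr]

omit [CompleteSpace X] in
lemma green_apply_neg (T : ℝ → X →L[ℝ] X) (P : X →L[ℝ] X) {r : ℝ} (hr : ¬ 0 ≤ r) (x : X) :
    greenKernel T P r x = -(T r (x - P x)) := by
  simp [greenKernel, if_neg hr]

omit [CompleteSpace X] in
lemma green_norm_bound {T : ℝ → X →L[ℝ] X} {P : X →L[ℝ] X} {k α : ℝ}
    (hP : IsDichotomyProjection T P k α) (hk : 1 ≤ k) (r : ℝ) (x : X) :
    ‖greenKernel T P r x‖ ≤ k * (1 + ‖P‖) * Real.exp (-α * |r|) * ‖x‖ := by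
  have hk0 : (0:ℝ) ≤ k := le_trans zero_le_one hk
  by_cases hr : 0 ≤ r
  · rw [green_apply_nonneg T P hr, abs_of_nonneg hr]
    calc ‖T r (P x)‖ ≤ k * Real.exp (-α * r) * ‖P x‖ := hP.2.2.1 x r hr
      _ ≤ k * Real.exp (-α * r) * ((1 + ‖P‖) * ‖x‖) := by
          apply mul_le_mul_of_nonneg_left _ (by positivity)
          calc ‖P x‖ ≤ ‖P‖ * ‖x‖ := P.le_opNorm x
            _ ≤ (1 + ‖P‖) * ‖x‖ := by nlinarith [norm_nonneg x, norm_nonneg P]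
      _ = k * (1 + ‖P‖) * Real.exp (-α * r) * ‖x‖ := by ring
  · push_neg at hr
    rw [green_apply_neg T P (not_le.mpr hr), norm_neg, abs_of_neg hr]
    calc ‖T r (x - P x)‖ ≤ k * Real.exp (α * r) * ‖x - P x‖ := hP.2.2.2 x r hr.le
      _ ≤ k * Real.exp (α * r) * ((1 + ‖P‖) * ‖x‖) := by
          apply mul_le_mul_of_nonneg_left _ (by positivity)
          calc ‖x - P x‖ ≤ ‖x‖ + ‖P x‖ := norm_sub_le _ _
            _ ≤ (1 + ‖P‖) * ‖x‖ := by nlinarith [P.le_opNorm x, norm_nonneg x, norm_nonneg P]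
      _ = k * (1 + ‖P‖) * Real.exp (-α * -r) * ‖x‖ := by ring_nf

lemma integrable_exp_abs {α : ℝ} (hα : 0 < α) (t : ℝ) :
    Integrable fun s : ℝ => Real.exp (-α * |t - s|) := by
  have h1 : IntegrableOn (fun s : ℝ => Real.exp (-α * |s|)) (Ioi 0) := by
    apply (exp_neg_integrableOn_Ioi 0 hα).congr_fun _ measurableSet_Ioi
    intro s hs
    simp [abs_of_pos (mem_Ioi.mp hs)]
  have h1' : IntegrableOn (fun s : ℝ => Real.exp (-α * |s|)) (Ici 0) := by
    rw [← Ioi_union_left]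
    exact h1.union (by simp [IntegrableOn])
  have h2 : IntegrableOn (fun s : ℝ => Real.exp (-α * |s|)) (Iic 0) := by
    apply (integrable_indicator_iff measurableSet_Iic).mp
    have h3 := ((integrable_indicator_iff measurableSet_Ici).mpr h1').comp_neg
    apply h3.congr
    apply ae_of_all
    intro s
    simp only []
    by_cases hs : s ≤ 0
    · rw [indicator_of_mem (by simpa using hs : -s ∈ Ici (0:ℝ)),
        indicator_of_mem (by simpa using hs : s ∈ Iic (0:ℝ))]
      simp [abs_neg]
    · rw [indicator_of_notMem (show -s ∉ Ici (0:ℝ) by simpa using not_le.mp hs),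
        indicator_of_notMem (show s ∉ Iic (0:ℝ) by simpa using not_le.mp hs)]
  have base : Integrable fun s : ℝ => Real.exp (-α * |s|) := by
    rw [← integrableOn_univ, ← Iic_union_Ioi (a := (0:ℝ))]
    exact h2.union h1
  apply (base.comp_sub_right t).congr
  apply ae_of_all
  intro s
  simp only [abs_sub_comm s t]

lemma green_meas {T : ℝ → X →L[ℝ] X} (hT : IsC0Group T) (P : X →L[ℝ] X)
    {F : ℝ → X} (hF : Continuous F) (t : ℝ) :
    StronglyMeasurable fun s => greenKernel T P (t - s) (F s) := by
  have h1 : Continuous fun s => T (t - s) (P (F s)) :=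
    c0_joint_cont hT ((P.continuous).comp hF) (continuous_const.sub continuous_id)
  have h2 : Continuous fun s => -(T (t - s) (F s - P (F s))) :=
    (c0_joint_cont hT (hF.sub ((P.continuous).comp hF))
      (continuous_const.sub continuous_id)).neg
  have heq : (fun s => greenKernel T P (t - s) (F s))
      = (Iic t).piecewise (fun s => T (t - s) (P (F s)))
          (fun s => -(T (t - s) (F s - P (F s)))) := by
    funext s
    by_cases hs : s ≤ t
    · rw [piecewise_eq_of_mem _ _ _ (mem_Iic.mpr hs),
        green_apply_nonneg _ _ (by linarith)]
    · rw [piecewise_eq_of_notMem _ _ _ (by simpa using hs),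
        green_apply_neg _ _ (by push_neg at hs ⊢; linarith)]
  rw [heq]
  exact StronglyMeasurable.piecewise measurableSet_Iic h1.stronglyMeasurable h2.stronglyMeasurable

lemma green_integrable {T : ℝ → X →L[ℝ] X} (hT : IsC0Group T) {P : X →L[ℝ] X} {k α : ℝ}
    (hP : IsDichotomyProjection T P k α) (hk : 1 ≤ k) (hα : 0 < α)
    {F : ℝ → X} (hF : Continuous F) {Mf : ℝ} (hFb : ∀ s, ‖F s‖ ≤ Mf) (t : ℝ) :
    Integrable fun s => greenKernel T P (t - s) (F s) := by
  apply Integrable.mono' ((integrable_exp_abs hα t).const_mul (k * (1 + ‖P‖) * Mf))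
    (green_meas hT P hF t).aestronglyMeasurable
  apply ae_of_all
  intro s
  have hC : (0:ℝ) ≤ k * (1 + ‖P‖) := by positivity
  calc ‖greenKernel T P (t - s) (F s)‖
      ≤ k * (1 + ‖P‖) * Real.exp (-α * |t - s|) * ‖F s‖ := green_norm_bound hP hk _ _
    _ ≤ k * (1 + ‖P‖) * Mf * Real.exp (-α * |t - s|) := by
        nlinarith [Real.exp_pos (-α * |t - s|), hFb s, norm_nonneg (F s),
          mul_le_mul_of_nonneg_left (hFb s) hC]

lemma w_shift {T : ℝ → X →L[ℝ] X} (hT : IsC0Group T) {P : X →L[ℝ] X} {k α : ℝ}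
    (hP : IsDichotomyProjection T P k α) (hk : 1 ≤ k) (hα : 0 < α)
    {F : ℝ → X} (hF : Continuous F) {Mf : ℝ} (hFb : ∀ s, ‖F s‖ ≤ Mf)
    {w : ℝ → X} (hw : ∀ t, w t = ∫ s : ℝ, greenKernel T P (t - s) (F s)) (t : ℝ) :
    w t = T t (w 0) + ∫ s in (0:ℝ)..t, T (t - s) (F s) := by
  have I1 := green_integrable hT hP hk hα hF hFb t
  have I0 := green_integrable hT hP hk hα hF hFb 0
  have hT0 : T t (w 0) = ∫ s : ℝ, T t (greenKernel T P (0 - s) (F s)) := by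
    rw [hw 0, ContinuousLinearMap.integral_comp_comm _ I0]
  have key : w t - T t (w 0)
      = ∫ s : ℝ, (greenKernel T P (t - s) (F s) - T t (greenKernel T P (0 - s) (F s))) := by
    rw [hw t, hT0, integral_sub I1 ((T t).integrable_comp I0)]
  have key2 : w t - T t (w 0) = ∫ s in (0:ℝ)..t, T (t - s) (F s) := by
    by_cases ht : 0 ≤ t
    · have hpt : ∀ s : ℝ, greenKernel T P (t - s) (F s) - T t (greenKernel T P (0 - s) (F s))
          = (Ioc (0:ℝ) t).indicator (fun s => T (t - s) (F s)) s := by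
        intro s
        rcases le_or_gt s 0 with hs0 | hs0
        · rw [green_apply_nonneg _ _ (by linarith), green_apply_nonneg _ _ (by linarith),
            c0_apply_apply hT t (0 - s), indicator_of_notMem (by simp [hs0] : s ∉ Ioc (0:ℝ) t)]
          have e : t + (0 - s) = t - s := by ring
          rw [e, sub_self]
        · rcases le_or_gt s t with hst | hst
          · rw [green_apply_nonneg _ _ (by linarith),
              green_apply_neg _ _ (by simp only [zero_sub]; linarith),
              indicator_of_mem (mem_Ioc.mpr ⟨hs0, hst⟩)]
            rw [map_neg, c0_apply_apply hT t (0 - s)]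
            have e : t + (0 - s) = t - s := by ring
            rw [e, sub_neg_eq_add, ← map_add]
            congr 1
            abel
          · rw [green_apply_neg _ _ (by push_neg; linarith),
              green_apply_neg _ _ (by simp only [zero_sub]; push_neg; linarith),
              indicator_of_notMem (by simp [not_le.mpr hst] : s ∉ Ioc (0:ℝ) t)]
            rw [map_neg, c0_apply_apply hT t (0 - s)]
            have e : t + (0 - s) = t - s := by ring
            rw [e, sub_self]
      rw [key]
      simp_rw [hpt]
      rw [integral_indicator measurableSet_Ioc, intervalIntegral.integral_of_le ht]
    · push_neg at ht
      have hpt : ∀ s : ℝ, greenKernel T P (t - s) (F s) - T t (greenKernel T P (0 - s) (F s))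
          = (Ioc t (0:ℝ)).indicator (fun s => -(T (t - s) (F s))) s := by
        intro s
        rcases le_or_gt s t with hs0 | hs0
        · rw [green_apply_nonneg _ _ (by linarith), green_apply_nonneg _ _ (by linarith),
            c0_apply_apply hT t (0 - s),
            indicator_of_notMem (by simp [not_lt.mpr hs0] : s ∉ Ioc t (0:ℝ))]
          have e : t + (0 - s) = t - s := by ring
          rw [e, sub_self]
        · rcases le_or_gt s 0 with hst | hst
          · rw [green_apply_neg _ _ (by push_neg; linarith),
              green_apply_nonneg _ _ (by linarith),
              c0_apply_apply hT t (0 - s),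
              indicator_of_mem (mem_Ioc.mpr ⟨hs0, hst⟩)]
            have e : t + (0 - s) = t - s := by ring
            rw [e]
            conv_rhs => rw [show (F s : X) = (F s - P (F s)) + P (F s) by abel]
            rw [map_add]
            abel
          · rw [green_apply_neg _ _ (by push_neg; linarith),
              green_apply_neg _ _ (by simp only [zero_sub]; push_neg; linarith),
              indicator_of_notMem (by simp [hst] : s ∉ Ioc t (0:ℝ))]
            rw [map_neg, c0_apply_apply hT t (0 - s)]
            have e : t + (0 - s) = t - s := by ring
            rw [e, sub_self]
      rw [key]
      simp_rw [hpt]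
      rw [integral_indicator measurableSet_Ioc, integral_neg,
        ← intervalIntegral.integral_of_le ht.le, ← intervalIntegral.integral_symm]
  rw [sub_eq_iff_eq_add] at key2
  rw [key2, add_comm]

omit [CompleteSpace X] in
lemma lipschitz_cont {f : X → Y → X} {L : ℝ}
    (hfL : ∀ (x x' : X) (y y' : Y), ‖f x y - f x' y'‖ ≤ L * (‖x - x'‖ + ‖y - y'‖)) :
    Continuous fun p : X × Y => f p.1 p.2 := by
  have hmax : (0:ℝ) ≤ 2 * max L 1 := by nlinarith [le_max_right L 1]
  have : LipschitzWith (Real.toNNReal (2 * max L 1)) fun p : X × Y => f p.1 p.2 := by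
    apply LipschitzWith.of_dist_le_mul
    intro p q
    rw [dist_eq_norm]
    calc ‖f p.1 p.2 - f q.1 q.2‖ ≤ L * (‖p.1 - q.1‖ + ‖p.2 - q.2‖) := hfL _ _ _ _
      _ ≤ max L 1 * (‖p.1 - q.1‖ + ‖p.2 - q.2‖) := by
          apply mul_le_mul_of_nonneg_right (le_max_left _ _) (by positivity)
      _ ≤ max L 1 * (2 * dist p q) := by
          apply mul_le_mul_of_nonneg_left _ (le_trans zero_le_one (le_max_right _ _))
          rw [Prod.dist_eq, dist_eq_norm, dist_eq_norm]
          have h1 : ‖p.1 - q.1‖ ≤ max ‖p.1 - q.1‖ ‖p.2 - q.2‖ := le_max_left _ _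
          have h2 : ‖p.2 - q.2‖ ≤ max ‖p.1 - q.1‖ ‖p.2 - q.2‖ := le_max_right _ _
          linarith
      _ = Real.toNNReal (2 * max L 1) * dist p q := by
          rw [Real.coe_toNNReal _ hmax]
          ring
  exact this.continuous

lemma mild_unique {T : ℝ → X →L[ℝ] X} (hT : IsC0Group T) {f : X → Y → X} {L : ℝ}
    (hfL : ∀ (x x' : X) (y y' : Y), ‖f x y - f x' y'‖ ≤ L * (‖x - x'‖ + ‖y - y'‖))
    {u v : ℝ → X} {y : ℝ → Y} (hu : Continuous u) (hv : Continuous v) (hy : Continuous y)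
    (hue : ∀ t, u t = T t (u 0) + ∫ s in (0:ℝ)..t, T (t - s) (f (u s) (y s)))
    (hve : ∀ t, v t = T t (v 0) + ∫ s in (0:ℝ)..t, T (t - s) (f (v s) (y s)))
    (h0 : u 0 = v 0) : ∀ t, u t = v t := by
  have hfc : Continuous fun p : X × Y => f p.1 p.2 := lipschitz_cont hfL
  have hfu : Continuous fun s => f (u s) (y s) := hfc.comp (hu.prodMk hy)
  have hfv : Continuous fun s => f (v s) (y s) := hfc.comp (hv.prodMk hy)
  intro t₀
  set b : ℝ := |t₀| with hbdef
  have hb0 : (0:ℝ) ≤ b := abs_nonneg _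
  obtain ⟨M, hM0, hM⟩ := c0_local_bound hT b
  set δ : ℝ → X := fun s => u s - v s with hδdef
  have hδc : Continuous δ := hu.sub hv
  have hgu : ∀ t, Continuous fun s => T (t - s) (f (u s) (y s)) := fun t =>
    c0_joint_cont hT hfu (continuous_const.sub continuous_id)
  have hgv : ∀ t, Continuous fun s => T (t - s) (f (v s) (y s)) := fun t =>
    c0_joint_cont hT hfv (continuous_const.sub continuous_id)
  have e1 : ∀ t, δ t = ∫ s in (0:ℝ)..t,
      (T (t - s) (f (u s) (y s)) - T (t - s) (f (v s) (y s))) := by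
    intro t
    have h2 : δ t = (∫ s in (0:ℝ)..t, T (t - s) (f (u s) (y s)))
        - ∫ s in (0:ℝ)..t, T (t - s) (f (v s) (y s)) := by
      simp only [hδdef]
      rw [hue t, hve t, h0]
      abel
    rw [h2, ← intervalIntegral.integral_sub ((hgu t).intervalIntegrable _ _)
      ((hgv t).intervalIntegrable _ _)]
  -- pointwise norm bound on the integrand
  have hptbd : ∀ t s : ℝ, |t - s| ≤ b →
      ‖T (t - s) (f (u s) (y s)) - T (t - s) (f (v s) (y s))‖ ≤ M * L * ‖δ s‖ := by
    intro t s hts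
    rw [← map_sub]
    calc ‖T (t - s) (f (u s) (y s) - f (v s) (y s))‖
        ≤ ‖T (t - s)‖ * ‖f (u s) (y s) - f (v s) (y s)‖ := (T (t - s)).le_opNorm _
      _ ≤ M * ‖f (u s) (y s) - f (v s) (y s)‖ :=
          mul_le_mul_of_nonneg_right (hM _ hts) (norm_nonneg _)
      _ ≤ M * (L * ‖δ s‖) := by
          apply mul_le_mul_of_nonneg_left _ hM0
          have := hfL (u s) (v s) (y s) (y s)
          simpa [hδdef] using this
      _ = M * L * ‖δ s‖ := by ring
  -- positive times
  have hpos : ∀ t, 0 ≤ t → t ≤ b → ‖δ t‖ ≤ M * L * ∫ s in (0:ℝ)..t, ‖δ s‖ := by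
    intro t ht0 htb
    rw [e1 t]
    calc ‖∫ s in (0:ℝ)..t, (T (t - s) (f (u s) (y s)) - T (t - s) (f (v s) (y s)))‖
        ≤ ∫ s in (0:ℝ)..t, ‖T (t - s) (f (u s) (y s)) - T (t - s) (f (v s) (y s))‖ :=
          intervalIntegral.norm_integral_le_integral_norm ht0
      _ ≤ ∫ s in (0:ℝ)..t, M * L * ‖δ s‖ := by
          apply intervalIntegral.integral_mono_on ht0
            (((hgu t).sub (hgv t)).norm.intervalIntegrable _ _)
            (((continuous_const.mul hδc.norm).intervalIntegrable _ _ : IntervalIntegrable (fun s => M * L * ‖δ s‖) volume _ _))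
          intro s hs
          exact hptbd t s (by rw [abs_le]; constructor <;> [linarith [hs.1, hs.2]; linarith [hs.1, hs.2]])
      _ = M * L * ∫ s in (0:ℝ)..t, ‖δ s‖ := by
          rw [← intervalIntegral.integral_const_mul]
  -- negative times
  have hneg : ∀ t, 0 ≤ t → t ≤ b → ‖δ (-t)‖ ≤ M * L * ∫ s in (0:ℝ)..t, ‖δ (-s)‖ := by
    intro t ht0 htb
    have hx : ∫ s in (0:ℝ)..t, ‖δ (-s)‖ = ∫ s in (-t)..(0:ℝ), ‖δ s‖ := by
      rw [intervalIntegral.integral_comp_neg (fun s => ‖δ s‖)]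
      norm_num
    rw [hx, e1 (-t)]
    rw [intervalIntegral.integral_symm, norm_neg]
    calc ‖∫ s in (-t)..(0:ℝ), (T (-t - s) (f (u s) (y s)) - T (-t - s) (f (v s) (y s)))‖
        ≤ ∫ s in (-t)..(0:ℝ), ‖T (-t - s) (f (u s) (y s)) - T (-t - s) (f (v s) (y s))‖ :=
          intervalIntegral.norm_integral_le_integral_norm (by linarith)
      _ ≤ ∫ s in (-t)..(0:ℝ), M * L * ‖δ s‖ := by
          apply intervalIntegral.integral_mono_on (by linarith)
            (((hgu (-t)).sub (hgv (-t))).norm.intervalIntegrable _ _)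
            (((continuous_const.mul hδc.norm).intervalIntegrable _ _ : IntervalIntegrable (fun s => M * L * ‖δ s‖) volume _ _))
          intro s hs
          exact hptbd (-t) s (by rw [abs_le]; constructor <;> [linarith [hs.1, hs.2]; linarith [hs.1, hs.2]])
      _ = M * L * ∫ s in (-t)..(0:ℝ), ‖δ s‖ := by
          rw [← intervalIntegral.integral_const_mul]
  -- Gronwall core, applied to a general continuous nonneg function
  have gron : ∀ φ : ℝ → ℝ, Continuous φ → (∀ s, 0 ≤ φ s) →
      (∀ t, 0 ≤ t → t ≤ b → φ t ≤ M * L * ∫ s in (0:ℝ)..t, φ s) →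
      ∀ t, 0 ≤ t → t ≤ b → φ t = 0 := by
    intro φ hφc hφ0 hφb t ht0 htb
    set ψ : ℝ → ℝ := fun r => ∫ s in (0:ℝ)..r, φ s with hψdef
    have hψd : ∀ r : ℝ, HasDerivAt ψ (φ r) r := fun r =>
      (hφc.integral_hasStrictDerivAt 0 r).hasDerivAt
    have hψc : Continuous ψ := by
      rw [continuous_iff_continuousAt]
      exact fun r => (hψd r).continuousAt
    have hψnn : ∀ r, 0 ≤ r → 0 ≤ ψ r := fun r hr =>
      intervalIntegral.integral_nonneg hr fun s _ => hφ0 s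
    have key := norm_le_gronwallBound_of_norm_deriv_right_le (f := ψ)
      (f' := fun r => φ r) (δ := 0) (K := M * L) (ε := 0) (a := 0) (b := b)
      hψc.continuousOn (fun x _ => (hψd x).hasDerivWithinAt) (by simp [hψdef]) ?_
    · have h1 := key t ⟨ht0, htb⟩
      rw [gronwallBound_ε0] at h1
      simp only [zero_mul] at h1
      have hψ0 : ψ t = 0 := by
        have h3 : |ψ t| ≤ 0 := by rwa [Real.norm_eq_abs] at h1
        have h4 := abs_nonneg (ψ t)
        have h5 := le_abs_self (ψ t)
        have h6 := neg_abs_le (ψ t)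
        linarith
      have := hφb t ht0 htb
      rw [show (∫ s in (0:ℝ)..t, φ s) = ψ t from rfl, hψ0, mul_zero] at this
      linarith [hφ0 t]
    · intro x hx
      rw [Real.norm_eq_abs, abs_of_nonneg (hφ0 x), Real.norm_eq_abs,
        abs_of_nonneg (hψnn x hx.1), add_zero]
      exact hφb x hx.1 hx.2.le
  rcases le_or_gt 0 t₀ with ht | ht
  · have := gron (fun s => ‖δ s‖) hδc.norm (fun s => norm_nonneg _) hpos t₀ ht
      (le_abs_self t₀)
    have hδ0 : δ t₀ = 0 := norm_eq_zero.mp this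
    simpa [hδdef, sub_eq_zero] using hδ0
  · have := gron (fun s => ‖δ (-s)‖) (hδc.norm.comp continuous_neg)
      (fun s => norm_nonneg _) hneg (-t₀) (by linarith) (by rw [hbdef, abs_of_neg ht])
    have hδ0 : δ t₀ = 0 := by
      have h2 : δ (-(-t₀)) = 0 := norm_eq_zero.mp this
      simpa using h2
    simpa [hδdef, sub_eq_zero] using hδ0

end AuxLemmas


/-- `H ∘ G = id` on `X × Y`. -/
theorem H_comp_G_eq_id
    (TA : ℝ → X →L[ℝ] X) (TB : ℝ → Y →L[ℝ] Y)
    (hTA : IsC0Group TA) (hTB : IsC0Group TB)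
    (P : X →L[ℝ] X) (k α : ℝ) (hk : 1 ≤ k) (hα : 0 < α)
    (hP : IsDichotomyProjection TA P k α)
    (f : X → Y → X) (Mf L : ℝ)
    (hfB : ∀ (x : X) (y : Y), ‖f x y‖ ≤ Mf)
    (hfL : ∀ (x x' : X) (y y' : Y), ‖f x y - f x' y'‖ ≤ L * (‖x - x'‖ + ‖y - y'‖))
    (hsmall : 4 * k * α⁻¹ * L < 1)
    -- the family of mild solutions with prescribed initial values, defining h
    (U₁ : X → Y → ℝ → X) (U₂ : X → Y → ℝ → Y)
    (hU : ∀ (ξ : X) (η : Y), IsMildSolution TA TB f (U₁ ξ η) (U₂ ξ η) ∧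
      U₁ ξ η 0 = ξ ∧ U₂ ξ η 0 = η)
    (h : X → Y → X)
    (hh : ∀ (ξ : X) (η : Y),
      h ξ η = -∫ s : ℝ, greenKernel TA P (-s) (f (U₁ ξ η s) (U₂ ξ η s)))
    -- the family of bounded fixed points, defining g
    (w : X → Y → ℝ → X)
    (hw : ∀ (ξ : X) (η : Y), Continuous (w ξ η) ∧
      (∃ C : ℝ, ∀ t : ℝ, ‖w ξ η t‖ ≤ C) ∧
      (∀ t : ℝ, w ξ η t
        = ∫ s : ℝ, greenKernel TA P (t - s) (f (TA s ξ + w ξ η s) (TB s η))))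
    (g : X → Y → X) (hg : ∀ (ξ : X) (η : Y), g ξ η = w ξ η 0) :
    ∀ (v₁ : X) (v₂ : Y),
      (((v₁ + g v₁ v₂) + h (v₁ + g v₁ v₂) v₂, v₂) : X × Y) = (v₁, v₂) := by
  intro v₁ v₂
  obtain ⟨hwc, ⟨C, hwB⟩, hwe⟩ := hw v₁ v₂
  set W : ℝ → X := w v₁ v₂ with hWdef
  set F : ℝ → X := fun s => f (TA s v₁ + W s) (TB s v₂) with hFdef
  have hTBv : Continuous fun s => TB s v₂ := hTB.2.2 v₂
  have hTAv : Continuous fun s => TA s v₁ := hTA.2.2 v₁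
  have hFc : Continuous F := (lipschitz_cont hfL).comp ((hTAv.add hwc).prodMk hTBv)
  have hFb : ∀ s, ‖F s‖ ≤ Mf := fun s => hfB _ _
  have hwint : ∀ t, W t = ∫ s : ℝ, greenKernel TA P (t - s) (F s) := hwe
  have hshift := w_shift hTA hP hk hα hFc hFb hwint
  set ξ : X := v₁ + g v₁ v₂ with hξdef
  have hgW : g v₁ v₂ = W 0 := hg v₁ v₂
  set u : ℝ → X := fun t => TA t v₁ + W t with hudef
  have hTA0 : ∀ x : X, TA 0 x = x := fun x => by rw [hTA.1]; rfl
  have hTB0 : ∀ z : Y, TB 0 z = z := fun z => by rw [hTB.1]; rfl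
  have huc : Continuous u := hTAv.add hwc
  have hu0 : u 0 = ξ := by
    simp only [hudef, hξdef, hgW, hTA0 v₁]
  have hue : ∀ t, u t = TA t (u 0) + ∫ s in (0:ℝ)..t, TA (t - s) (f (u s) (TB s v₂)) := by
    intro t
    show TA t v₁ + W t = TA t (TA 0 v₁ + W 0) + ∫ s in (0:ℝ)..t, TA (t - s) (F s)
    rw [hTA0 v₁, map_add, hshift t]
    abel
  obtain ⟨⟨hU1c, hU2c, hU1e, hU2e⟩, hU10, hU20⟩ := hU ξ v₂
  have hU2 : ∀ t, U₂ ξ v₂ t = TB t v₂ := fun t => by rw [hU2e t, hU20]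
  have hU1e' : ∀ t, U₁ ξ v₂ t
      = TA t (U₁ ξ v₂ 0) + ∫ s in (0:ℝ)..t, TA (t - s) (f (U₁ ξ v₂ s) (TB s v₂)) := by
    intro t
    rw [hU1e t]
    congr 1
    apply intervalIntegral.integral_congr
    intro s _
    simp only [hU2 s]
  have huniq : ∀ t, U₁ ξ v₂ t = u t :=
    mild_unique hTA hfL hU1c huc hTBv hU1e' hue (by rw [hU10, hu0])
  have hhval : h ξ v₂ = -(W 0) := by
    rw [hh ξ v₂, hwint 0]
    have heq : (fun s : ℝ => greenKernel TA P (-s) (f (U₁ ξ v₂ s) (U₂ ξ v₂ s)))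
        = fun s : ℝ => greenKernel TA P (0 - s) (F s) := by
      funext s
      rw [huniq s, hU2 s]
      show greenKernel TA P (-s) (F s) = greenKernel TA P (0 - s) (F s)
      rw [zero_sub]
    rw [heq]
  have h1 : ξ + h ξ v₂ = v₁ := by
    rw [hhval, hξdef, hgW]
    abel
  rw [h1]


end
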